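/- Let n ≥ 2, let 1 ≤ c ≤ n−1, and let μ ∈ ℚⁿ be weakly decreasing on {1,…,c} and on {c+1,…,n}. Let d₁ := max over 1 ≤ j ≤ c−1 of (μ₁+⋯+μⱼ) − (j/c)(μ₁+⋯+μ_c) (d₁ := 0 if c = 1), let d₂ := max over 1 ≤ j ≤ n−c−1 of (μ_{c+1}+⋯+μ_{c+j}) − (j/(n−c))(μ_{c+1}+⋯+μₙ) (d₂ := 0 if c = n−1), and let depth_G(μ) := max over 1 ≤ j ≤ n−1 of (σ₁+⋯+σⱼ) − (j/n)(σ₁+⋯+σₙ), where σ is the weakly decreasing rearrangement of μ. Then max(d₁,d₂) = depth_G(μ) holds if and only if both of the following conditions hold: (1) (μ₁+⋯+μ_c)/c = (μ_{c+1}+⋯+μₙ)/(n−c), and (2) μ is constant on {1,…,c} or μ is constant on {c+1,…,n}. -/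

import Mathlib

/-- Sum of the `j` entries of `μ` in positions `o, o+1, …, o+j-1` (0-indexed):
the `j`-th partial sum of the block of `μ` starting at offset `o`. -/
def blockPsum {n : ℕ} (μ : Fin n → ℚ) (o j : ℕ) : ℚ :=
  ∑ i ∈ Finset.univ.filter (fun i : Fin n => o ≤ (i : ℕ) ∧ (i : ℕ) < o + j), μ i

/-- The depth of the block of `μ` of length `m` starting at offset `o`:
`max_{1 ≤ j ≤ m−1} (ν₁+⋯+νⱼ) − (j/m)(ν₁+⋯+ν_m)`, with value `0` if `m ≤ 1`. -/
def blockDepth {n : ℕ} (μ : Fin n → ℚ) (o m : ℕ) : ℚ :=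
  if h : (Finset.Icc 1 (m - 1)).Nonempty then
    (Finset.Icc 1 (m - 1)).sup' h fun j : ℕ =>
      blockPsum μ o j - (j : ℚ) / (m : ℚ) * blockPsum μ o m
  else 0

open Finset

def gval {n : ℕ} (f : Fin n → ℚ) (k : ℕ) : ℚ := if h : k < n then f ⟨k, h⟩ else 0

lemma gval_lt {n : ℕ} (f : Fin n → ℚ) {k : ℕ} (h : k < n) : gval f k = f ⟨k, h⟩ := dif_pos h

lemma blockPsum_eq_sum_range {n : ℕ} (f : Fin n → ℚ) (o j : ℕ) (h : o + j ≤ n) :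
    blockPsum f o j = ∑ k ∈ Finset.range j, gval f (o + k) := by
  rw [blockPsum]
  refine Finset.sum_bij' (fun i _ => (i : ℕ) - o) (fun k hk => ⟨o + k, by
    simp only [mem_range] at hk; omega⟩) ?_ ?_ ?_ ?_ ?_
  · intro i hi; simp only [mem_filter, mem_univ, true_and] at hi; simp only [mem_range]; omega
  · intro k hk; simp only [mem_range] at hk; simp only [mem_filter, mem_univ, true_and]; omega
  · intro i hi; simp only [mem_filter, mem_univ, true_and] at hi
    apply Fin.ext; simp; omega
  · intro k hk; simp only [mem_range] at hk; simp
  · intro i hi; simp only [mem_filter, mem_univ, true_and] at hi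
    rw [gval_lt f (by omega : o + ((i:ℕ) - o) < n)]
    congr 1; apply Fin.ext; simp; omega

lemma blockPsum_zero {n : ℕ} (f : Fin n → ℚ) (o : ℕ) : blockPsum f o 0 = 0 := by
  rw [blockPsum]
  have : (Finset.univ.filter fun i : Fin n => o ≤ (i : ℕ) ∧ (i : ℕ) < o + 0) = ∅ := by
    ext i; simp
  rw [this, Finset.sum_empty]

lemma card_filter_ico {n : ℕ} (a b : ℕ) (hb : b ≤ n) :
    (Finset.univ.filter fun i : Fin n => a ≤ (i : ℕ) ∧ (i : ℕ) < b).card = b - a := by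
  have h : ∀ m ∈ Finset.Ico a b, m < n := by intro m hm; simp only [mem_Ico] at hm; omega
  have : (Finset.univ.filter fun i : Fin n => a ≤ (i : ℕ) ∧ (i : ℕ) < b)
      = (Finset.Ico a b).attachFin h := by
    ext i; simp [Finset.mem_attachFin]
  rw [this, Finset.card_attachFin, Nat.card_Ico]

lemma sum_le_psum {n : ℕ} (f : Fin n → ℚ) (o m : ℕ) (hom : o + m ≤ n)
    (H : ∀ i j : Fin n, o ≤ (i:ℕ) → i ≤ j → (j:ℕ) < o + m → f j ≤ f i)
    (t : Finset (Fin n)) (ht : ∀ i ∈ t, o ≤ (i:ℕ) ∧ (i:ℕ) < o + m) :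
    t.card ≤ m ∧ ∑ i ∈ t, f i ≤ blockPsum f o t.card := by
  have hsub : t ⊆ Finset.univ.filter fun i : Fin n => o ≤ (i:ℕ) ∧ (i:ℕ) < o + m := by
    intro i hi; simp only [mem_filter, mem_univ, true_and]; exact ht i hi
  have hcard : t.card ≤ m := by
    have := Finset.card_le_card hsub
    rw [card_filter_ico o (o+m) hom] at this; omega
  refine ⟨hcard, ?_⟩
  obtain ⟨j, hj⟩ : ∃ j, t.card = j := ⟨t.card, rfl⟩
  rw [hj]
  have hkey : ∀ k (hk : k < j), o + k ≤ ((t.orderEmbOfFin hj ⟨k, hk⟩ : Fin n) : ℕ) := by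
    intro k
    induction k with
    | zero => intro hk
              have := (ht _ (t.orderEmbOfFin_mem hj ⟨0, hk⟩)).1
              omega
    | succ k ih =>
        intro hk
        have h1 := ih (by omega)
        have h2 : (t.orderEmbOfFin hj ⟨k, by omega⟩) < t.orderEmbOfFin hj ⟨k+1, hk⟩ := by
          apply (t.orderEmbOfFin hj).strictMono; rw [Fin.lt_def]; simp
        rw [Fin.lt_def] at h2; omega
  have hmem : ∀ i : Fin j, t.orderEmbOfFin hj i ∈ t := t.orderEmbOfFin_mem hj
  have hsum : ∑ i ∈ t, f i = ∑ i : Fin j, f (t.orderEmbOfFin hj i) := by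
    refine (Finset.sum_bij (fun (i : Fin j) _ => (t.orderEmbOfFin hj i : Fin n))
      (fun i _ => hmem i) (fun i _ i' _ hii' => (t.orderEmbOfFin hj).injective hii') ?_
      (fun i _ => rfl)).symm
    intro a ha
    have : a ∈ Set.range (t.orderEmbOfFin hj) := by
      rw [Finset.range_orderEmbOfFin]; exact ha
    obtain ⟨i, hi⟩ := this
    exact ⟨i, Finset.mem_univ i, hi⟩
  rw [hsum, blockPsum_eq_sum_range f o j (by omega), ← Fin.sum_univ_eq_sum_range]
  apply Finset.sum_le_sum
  intro i _
  have h1 := hkey i.1 i.2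
  have h2 := ht _ (hmem i)
  rw [gval_lt f (by omega : o + (i:ℕ) < n)]
  exact H ⟨o + i.1, by omega⟩ _ (by simp) (by rw [Fin.le_def]; simpa using h1) h2.2

lemma split_le_psum {n c : ℕ} (hc : c ≤ n) (μ σ : Fin n → ℚ) (π : Equiv.Perm (Fin n))
    (hσ : ∀ i, σ i = μ (π i)) (hanti : Antitone σ) {j₁ j₂ : ℕ} (h1 : j₁ ≤ c) (h2 : j₂ ≤ n - c) :
    blockPsum μ 0 j₁ + blockPsum μ c j₂ ≤ blockPsum σ 0 (j₁ + j₂) := by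
  have hdisj : Disjoint (Finset.univ.filter fun i : Fin n => 0 ≤ (i:ℕ) ∧ (i:ℕ) < 0 + j₁)
      (Finset.univ.filter fun i : Fin n => c ≤ (i:ℕ) ∧ (i:ℕ) < c + j₂) := by
    rw [Finset.disjoint_left]
    intro i hi1 hi2
    simp only [mem_filter, mem_univ, true_and] at hi1 hi2
    omega
  set t := (Finset.univ.filter fun i : Fin n => 0 ≤ (i:ℕ) ∧ (i:ℕ) < 0 + j₁) ∪
      (Finset.univ.filter fun i : Fin n => c ≤ (i:ℕ) ∧ (i:ℕ) < c + j₂) with ht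
  have hcard : t.card = j₁ + j₂ := by
    rw [ht, Finset.card_union_of_disjoint hdisj, card_filter_ico 0 (0+j₁) (by omega),
      card_filter_ico c (c+j₂) (by omega)]
    omega
  have hμσ : ∀ i, μ i = σ (π.symm i) := fun i => by rw [hσ]; simp
  have hinj : Set.InjOn π.symm t := fun a _ b _ h => π.symm.injective h
  have himg := sum_le_psum σ 0 n (by omega) (fun i j _ hij _ => hanti hij) (t.image π.symm)
    (fun i _ => ⟨by omega, by omega⟩)
  have hicard : (t.image π.symm).card = j₁ + j₂ := by
    rw [Finset.card_image_of_injective _ π.symm.injective, hcard]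
  calc blockPsum μ 0 j₁ + blockPsum μ c j₂ = ∑ i ∈ t, μ i := (Finset.sum_union hdisj).symm
    _ = ∑ i ∈ t, σ (π.symm i) := Finset.sum_congr rfl (fun i _ => hμσ i)
    _ = ∑ k ∈ t.image π.symm, σ k := (Finset.sum_image (fun a _ b _ h => π.symm.injective h)).symm
    _ ≤ blockPsum σ 0 ((t.image π.symm).card) := himg.2
    _ = blockPsum σ 0 (j₁ + j₂) := by rw [hicard]

lemma psum_le_split {n c : ℕ} (hc : c ≤ n) (μ σ : Fin n → ℚ) (π : Equiv.Perm (Fin n))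
    (hσ : ∀ i, σ i = μ (π i))
    (hdec1 : ∀ i j : Fin n, i ≤ j → (j : ℕ) < c → μ j ≤ μ i)
    (hdec2 : ∀ i j : Fin n, c ≤ (i : ℕ) → i ≤ j → μ j ≤ μ i) {j : ℕ} (hjn : j ≤ n) :
    ∃ j₁ j₂, j₁ ≤ c ∧ j₂ ≤ n - c ∧ j₁ + j₂ = j ∧
      blockPsum σ 0 j ≤ blockPsum μ 0 j₁ + blockPsum μ c j₂ := by
  set s := (Finset.univ.filter fun i : Fin n => 0 ≤ (i:ℕ) ∧ (i:ℕ) < 0 + j).image π with hs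
  set s₁ := s.filter (fun i : Fin n => (i:ℕ) < c) with hs1
  set s₂ := s.filter (fun i : Fin n => ¬ (i:ℕ) < c) with hs2
  have hscard : s.card = j := by
    rw [hs, Finset.card_image_of_injective _ π.injective, card_filter_ico 0 (0+j) (by omega)]
    omega
  have hsplit : s₁.card + s₂.card = j := by
    rw [hs1, hs2, Finset.card_filter_add_card_filter_not, hscard]
  have h1 := sum_le_psum μ 0 c (by omega) (fun i j' _ hij hj' => hdec1 i j' hij (by omega)) s₁
    (fun i hi => by simp only [hs1, mem_filter] at hi; exact ⟨by omega, by omega⟩)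
  have h2 := sum_le_psum μ c (n - c) (by omega)
    (fun i j' hi hij _ => hdec2 i j' hi hij) s₂
    (fun i hi => by
      simp only [hs2, mem_filter] at hi
      refine ⟨by omega, ?_⟩
      have := i.isLt; omega)
  refine ⟨s₁.card, s₂.card, h1.1, h2.1, hsplit, ?_⟩
  have hσsum : blockPsum σ 0 j = ∑ i ∈ s, μ i := by
    rw [hs, Finset.sum_image (fun a _ b _ h => π.injective h), blockPsum]
    exact Finset.sum_congr rfl (fun i _ => hσ i)
  rw [hσsum, ← Finset.sum_filter_add_sum_filter_not s (fun i : Fin n => (i:ℕ) < c)]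
  exact add_le_add h1.2 h2.2

def blockDepth' {n : ℕ} (μ : Fin n → ℚ) (o m : ℕ) : ℚ :=
  if h : (Finset.Icc 1 (m - 1)).Nonempty then
    (Finset.Icc 1 (m - 1)).sup' h fun j : ℕ =>
      blockPsum μ o j - (j : ℚ) / (m : ℚ) * blockPsum μ o m
  else 0

def trm {n : ℕ} (μ : Fin n → ℚ) (o m j : ℕ) : ℚ :=
  blockPsum μ o j - (j:ℚ)/(m:ℚ) * blockPsum μ o m

lemma le_blockDepth' {n : ℕ} (μ : Fin n → ℚ) (o m j : ℕ) (h1 : 1 ≤ j) (h2 : j ≤ m - 1) :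
    trm μ o m j ≤ blockDepth' μ o m := by
  have hj : j ∈ Finset.Icc 1 (m-1) := Finset.mem_Icc.2 ⟨h1, h2⟩
  rw [blockDepth', dif_pos ⟨j, hj⟩]
  exact Finset.le_sup' _ hj

lemma blockDepth'_exists {n : ℕ} (μ : Fin n → ℚ) (o m : ℕ) (hm : 2 ≤ m) :
    ∃ j, 1 ≤ j ∧ j ≤ m - 1 ∧ blockDepth' μ o m = trm μ o m j := by
  have hne : (Finset.Icc 1 (m-1)).Nonempty := ⟨1, Finset.mem_Icc.2 ⟨le_rfl, by omega⟩⟩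
  rw [blockDepth', dif_pos hne]
  obtain ⟨j, hj, hje⟩ := Finset.exists_mem_eq_sup' hne
    (fun j : ℕ => blockPsum μ o j - (j : ℚ) / (m : ℚ) * blockPsum μ o m)
  rw [Finset.mem_Icc] at hj
  exact ⟨j, hj.1, hj.2, hje⟩

lemma blockDepth'_small {n : ℕ} (μ : Fin n → ℚ) (o m : ℕ) (hm : m ≤ 1) :
    blockDepth' μ o m = 0 := by
  rw [blockDepth', dif_neg]
  simp only [Finset.nonempty_Icc, not_le]
  omega

lemma trm_zero {n : ℕ} (μ : Fin n → ℚ) (o m : ℕ) : trm μ o m 0 = 0 := by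
  simp [trm, blockPsum_zero]

lemma trm_top {n : ℕ} (μ : Fin n → ℚ) (o m : ℕ) (hm : 0 < m) : trm μ o m m = 0 := by
  have : ((m:ℕ):ℚ) ≠ 0 := Nat.cast_ne_zero.2 (by omega)
  rw [trm]; field_simp; ring

lemma blockDepth'_attain {n : ℕ} (μ : Fin n → ℚ) (o m : ℕ) (hm : 1 ≤ m) :
    ∃ j, 1 ≤ j ∧ j ≤ m ∧ blockDepth' μ o m = trm μ o m j := by
  rcases Nat.lt_or_ge m 2 with h | h
  · have hm1 : m = 1 := by omega
    exact ⟨1, le_rfl, by omega, by rw [blockDepth'_small μ o m (by omega), hm1,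
      trm_top μ o 1 (by omega)]⟩
  · obtain ⟨j, h1, h2, h3⟩ := blockDepth'_exists μ o m h
    exact ⟨j, h1, by omega, h3⟩

lemma blockDepth'_attain' {n : ℕ} (μ : Fin n → ℚ) (o m : ℕ) :
    ∃ j, j ≤ m - 1 ∧ blockDepth' μ o m = trm μ o m j := by
  rcases Nat.lt_or_ge m 2 with h | h
  · exact ⟨0, by omega, by rw [blockDepth'_small μ o m (by omega), trm_zero]⟩
  · obtain ⟨j, h1, h2, h3⟩ := blockDepth'_exists μ o m h
    exact ⟨j, h2, h3⟩

lemma psum_const {n : ℕ} (μ : Fin n → ℚ) (o m : ℕ) (hom : o + m ≤ n) (v : ℚ)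
    (hconst : ∀ k (hk : k < n), o ≤ k → k < o + m → μ ⟨k, hk⟩ = v) {j : ℕ} (hj : j ≤ m) :
    blockPsum μ o j = (j:ℚ) * v := by
  rw [blockPsum_eq_sum_range μ o j (by omega)]
  rw [Finset.sum_congr rfl (fun k hk => ?_), Finset.sum_const, Finset.card_range,
    nsmul_eq_mul]
  rw [Finset.mem_range] at hk
  rw [gval_lt μ (by omega : o + k < n)]
  exact hconst (o+k) (by omega) (by omega) (by omega)

lemma trm_const {n : ℕ} (μ : Fin n → ℚ) (o m : ℕ) (hom : o + m ≤ n) (hm : 0 < m) (v : ℚ)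
    (hconst : ∀ k (hk : k < n), o ≤ k → k < o + m → μ ⟨k, hk⟩ = v) {j : ℕ} (hj : j ≤ m) :
    trm μ o m j = 0 := by
  have hM : ((m:ℕ):ℚ) ≠ 0 := Nat.cast_ne_zero.2 (by omega)
  rw [trm, psum_const μ o m hom v hconst hj, psum_const μ o m hom v hconst le_rfl]
  field_simp
  ring

lemma blockDepth'_const {n : ℕ} (μ : Fin n → ℚ) (o m : ℕ) (hom : o + m ≤ n) (hm : 0 < m)
    (v : ℚ) (hconst : ∀ k (hk : k < n), o ≤ k → k < o + m → μ ⟨k, hk⟩ = v) :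
    blockDepth' μ o m = 0 := by
  obtain ⟨j, h1, h2⟩ := blockDepth'_attain' μ o m
  rw [h2, trm_const μ o m hom hm v hconst (by omega)]

lemma psum_total {n c : ℕ} (hc1 : 1 ≤ c) (hcn : c < n) (μ σ : Fin n → ℚ)
    (π : Equiv.Perm (Fin n)) (hσ : ∀ i, σ i = μ (π i))
    (hdec1 : ∀ i j : Fin n, i ≤ j → (j : ℕ) < c → μ j ≤ μ i)
    (hdec2 : ∀ i j : Fin n, c ≤ (i : ℕ) → i ≤ j → μ j ≤ μ i) (hanti : Antitone σ) :
    blockPsum σ 0 n = blockPsum μ 0 c + blockPsum μ c (n-c) := by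
  apply le_antisymm
  · obtain ⟨j₁, j₂, h1, h2, h3, h4⟩ := psum_le_split (by omega : c ≤ n) μ σ π hσ hdec1 hdec2
      (le_rfl : n ≤ n)
    have e1 : j₁ = c := by omega
    have e2 : j₂ = n - c := by omega
    rw [e1, e2] at h4; exact h4
  · have := split_le_psum (by omega : c ≤ n) μ σ π hσ hanti (le_rfl : c ≤ c)
      (le_rfl : n - c ≤ n - c)
    rwa [(by omega : c + (n - c) = n)] at this

lemma AID {n c : ℕ} (hc1 : 1 ≤ c) (hcn : c < n) (μ : Fin n → ℚ) (T : ℚ)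
    (hT : T = blockPsum μ 0 c + blockPsum μ c (n-c)) (j₁ j₂ : ℕ) :
    blockPsum μ 0 j₁ + blockPsum μ c j₂ - ((j₁+j₂:ℕ):ℚ)/(n:ℚ)*T =
      trm μ 0 c j₁ + trm μ c (n-c) j₂ +
      (blockPsum μ 0 c/(c:ℚ) - blockPsum μ c (n-c)/((n-c:ℕ):ℚ)) *
        ((j₁:ℚ)*((n-c:ℕ):ℚ) - (j₂:ℚ)*(c:ℚ))/(n:ℚ) := by
  have hC : (0:ℚ) < (c:ℚ) := by exact_mod_cast Nat.pos_of_ne_zero (by omega)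
  have hM : (0:ℚ) < ((n-c:ℕ):ℚ) := by exact_mod_cast Nat.pos_of_ne_zero (by omega)
  have hCM : (c:ℚ) + ((n-c:ℕ):ℚ) = (n:ℚ) := by
    exact_mod_cast congrArg (Nat.cast : ℕ → ℚ) (by omega : c + (n - c) = n)
  rw [hT, trm, trm, ← hCM]
  push_cast
  field_simp
  ring

lemma psum_lt_const {n : ℕ} (μ : Fin n → ℚ) (o m : ℕ) (hom : o + m ≤ n) (v : ℚ)
    (hub : ∀ i : Fin n, o ≤ (i:ℕ) → (i:ℕ) < o + m → μ i ≤ v)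
    (w : Fin n) (hw1 : o ≤ (w:ℕ)) (hw2 : (w:ℕ) < o + m) (hwlt : μ w < v) :
    blockPsum μ o m < (m:ℚ) * v := by
  rw [blockPsum]
  have hlt : ∑ i ∈ Finset.univ.filter (fun i : Fin n => o ≤ (i:ℕ) ∧ (i:ℕ) < o + m), μ i
      < ∑ _i ∈ Finset.univ.filter (fun i : Fin n => o ≤ (i:ℕ) ∧ (i:ℕ) < o + m), v := by
    apply Finset.sum_lt_sum
    · intro i hi
      simp only [Finset.mem_filter, Finset.mem_univ, true_and] at hi
      exact hub i hi.1 hi.2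
    · exact ⟨w, by simp only [Finset.mem_filter, Finset.mem_univ, true_and]; omega, hwlt⟩
  have hconst : ∑ _i ∈ Finset.univ.filter (fun i : Fin n => o ≤ (i:ℕ) ∧ (i:ℕ) < o + m), v
      = (m:ℚ) * v := by
    rw [Finset.sum_const, card_filter_ico o (o+m) hom, (by omega : o + m - o = m),
      nsmul_eq_mul]
  linarith

lemma blockDepth_eq {n : ℕ} (μ : Fin n → ℚ) (o m : ℕ) :
    blockDepth μ o m = blockDepth' μ o m := rfl

set_option maxHeartbeats 4000000 in
theorem stmt5 (n c : ℕ) (hn : 2 ≤ n) (hc1 : 1 ≤ c) (hc2 : c ≤ n - 1) (μ : Fin n → ℚ)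
    (hdec1 : ∀ i j : Fin n, i ≤ j → (j : ℕ) < c → μ j ≤ μ i)
    (hdec2 : ∀ i j : Fin n, c ≤ (i : ℕ) → i ≤ j → μ j ≤ μ i)
    (σ : Fin n → ℚ) (π : Equiv.Perm (Fin n))
    (hσ : ∀ i, σ i = μ (π i)) (hanti : Antitone σ) :
    max (blockDepth μ 0 c) (blockDepth μ c (n - c)) = blockDepth σ 0 n ↔
      (blockPsum μ 0 c / (c : ℚ) = blockPsum μ c (n - c) / ((n - c : ℕ) : ℚ) ∧
       ((∀ i j : Fin n, (i : ℕ) < c → (j : ℕ) < c → μ i = μ j) ∨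
        (∀ i j : Fin n, c ≤ (i : ℕ) → c ≤ (j : ℕ) → μ i = μ j))) := by
  have hcn : c < n := by omega
  have h0n : 0 < n := by omega
  have hC : (0:ℚ) < (c:ℚ) := by exact_mod_cast Nat.pos_of_ne_zero (by omega)
  have hM : (0:ℚ) < ((n-c:ℕ):ℚ) := by exact_mod_cast Nat.pos_of_ne_zero (by omega)
  have hN : (0:ℚ) < (n:ℚ) := by exact_mod_cast Nat.pos_of_ne_zero (by omega)
  have htot := psum_total hc1 hcn μ σ π hσ hdec1 hdec2 hanti
  simp only [blockDepth_eq]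
  have hLB : ∀ j₁ j₂ : ℕ, j₁ ≤ c → j₂ ≤ n - c → 1 ≤ j₁ + j₂ → j₁ + j₂ ≤ n - 1 →
      trm μ 0 c j₁ + trm μ c (n-c) j₂ +
      (blockPsum μ 0 c/(c:ℚ) - blockPsum μ c (n-c)/((n-c:ℕ):ℚ)) *
        ((j₁:ℚ)*((n-c:ℕ):ℚ) - (j₂:ℚ)*(c:ℚ))/(n:ℚ) ≤ blockDepth' σ 0 n := by
    intro j₁ j₂ h1 h2 h3 h4
    rw [← AID hc1 hcn μ _ htot j₁ j₂]
    have hs := split_le_psum (by omega : c ≤ n) μ σ π hσ hanti h1 h2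
    have h5 : blockPsum μ 0 j₁ + blockPsum μ c j₂ -
        ((j₁+j₂:ℕ):ℚ)/(n:ℚ) * blockPsum σ 0 n ≤ trm σ 0 n (j₁+j₂) := by
      rw [trm]; exact sub_le_sub_right hs _
    exact h5.trans (le_blockDepth' σ 0 n (j₁+j₂) h3 h4)
  have hUB : ∃ j₁ j₂ : ℕ, j₁ ≤ c ∧ j₂ ≤ n - c ∧ 1 ≤ j₁ + j₂ ∧ j₁ + j₂ ≤ n - 1 ∧
      blockDepth' σ 0 n ≤ trm μ 0 c j₁ + trm μ c (n-c) j₂ +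
      (blockPsum μ 0 c/(c:ℚ) - blockPsum μ c (n-c)/((n-c:ℕ):ℚ)) *
        ((j₁:ℚ)*((n-c:ℕ):ℚ) - (j₂:ℚ)*(c:ℚ))/(n:ℚ) := by
    obtain ⟨j, hj1, hj2, hje⟩ := blockDepth'_exists σ 0 n hn
    obtain ⟨j₁, j₂, h1, h2, h3, h4⟩ := psum_le_split (by omega : c ≤ n) μ σ π hσ hdec1 hdec2
      (show j ≤ n by omega)
    refine ⟨j₁, j₂, h1, h2, by omega, by omega, ?_⟩
    rw [← AID hc1 hcn μ _ htot j₁ j₂, hje, ← h3, trm]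
    rw [← h3] at h4
    exact sub_le_sub_right h4 _
  have hz10 : trm μ 0 c 0 = 0 := trm_zero μ 0 c
  have hz1c : trm μ 0 c c = 0 := trm_top μ 0 c (by omega)
  have hz20 : trm μ c (n-c) 0 = 0 := trm_zero μ c (n-c)
  have hz2m : trm μ c (n-c) (n-c) = 0 := trm_top μ c (n-c) (by omega)
  constructor
  · intro heq
    have hΔ : blockPsum μ 0 c/(c:ℚ) = blockPsum μ c (n-c)/((n-c:ℕ):ℚ) := by
      by_contra hne
      have hmaxlt : max (blockDepth' μ 0 c) (blockDepth' μ c (n-c)) < blockDepth' σ 0 n := by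
        rcases lt_or_gt_of_ne hne with hlt | hgt
        · apply max_lt
          · obtain ⟨j₁, hj₁, hd1⟩ := blockDepth'_attain' μ 0 c
            have h := hLB j₁ (n-c) (by omega) le_rfl (by omega) (by omega)
            have hcast : (j₁:ℚ) ≤ (c:ℚ) - 1 := by
              have : ((j₁+1:ℕ):ℚ) ≤ (c:ℚ) := Nat.cast_le.2 (by omega)
              push_cast at this; linarith
            have hpos : 0 < (blockPsum μ 0 c/(c:ℚ) - blockPsum μ c (n-c)/((n-c:ℕ):ℚ)) *
                ((j₁:ℚ)*((n-c:ℕ):ℚ) - (((n-c):ℕ):ℚ)*(c:ℚ))/(n:ℚ) := by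
              apply div_pos (mul_pos_of_neg_of_neg (by linarith) (by nlinarith)) hN
            rw [hd1]
            rw [hz2m] at h
            linarith
          · obtain ⟨j₂, hj₂1, hj₂m, hd2⟩ := blockDepth'_attain μ c (n-c) (by omega)
            have h := hLB 0 j₂ (by omega) hj₂m (by omega) (by omega)
            have hcast : (1:ℚ) ≤ (j₂:ℚ) := by exact_mod_cast Nat.cast_le.2 hj₂1
            have hpos : 0 < (blockPsum μ 0 c/(c:ℚ) - blockPsum μ c (n-c)/((n-c:ℕ):ℚ)) *
                (((0:ℕ):ℚ)*((n-c:ℕ):ℚ) - (j₂:ℚ)*(c:ℚ))/(n:ℚ) := by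
              apply div_pos (mul_pos_of_neg_of_neg (by linarith) (by push_cast; nlinarith)) hN
            rw [hd2]
            rw [hz10] at h
            linarith
        · apply max_lt
          · obtain ⟨j₁, hj₁1, hj₁c, hd1⟩ := blockDepth'_attain μ 0 c (by omega)
            have h := hLB j₁ 0 hj₁c (by omega) (by omega) (by omega)
            have hcast : (1:ℚ) ≤ (j₁:ℚ) := by exact_mod_cast Nat.cast_le.2 hj₁1
            have hpos : 0 < (blockPsum μ 0 c/(c:ℚ) - blockPsum μ c (n-c)/((n-c:ℕ):ℚ)) *
                ((j₁:ℚ)*((n-c:ℕ):ℚ) - ((0:ℕ):ℚ)*(c:ℚ))/(n:ℚ) := by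
              apply div_pos (mul_pos (by linarith) (by push_cast; nlinarith)) hN
            rw [hd1]
            rw [hz20] at h
            linarith
          · obtain ⟨j₂, hj₂m, hd2⟩ := blockDepth'_attain' μ c (n-c)
            have h := hLB c j₂ le_rfl (by omega) (by omega) (by omega)
            have hcast : (j₂:ℚ) ≤ ((n-c:ℕ):ℚ) - 1 := by
              have : ((j₂+1:ℕ):ℚ) ≤ ((n-c:ℕ):ℚ) := Nat.cast_le.2 (by omega)
              push_cast at this; linarith
            have hpos : 0 < (blockPsum μ 0 c/(c:ℚ) - blockPsum μ c (n-c)/((n-c:ℕ):ℚ)) *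
                (((c:ℕ):ℚ)*((n-c:ℕ):ℚ) - (j₂:ℚ)*(c:ℚ))/(n:ℚ) := by
              apply div_pos (mul_pos (by linarith) (by nlinarith)) hN
            rw [hd2]
            rw [hz1c] at h
            linarith
      exact absurd heq (ne_of_lt hmaxlt)
    refine ⟨hΔ, ?_⟩
    by_contra hcon
    push_neg at hcon
    obtain ⟨⟨i₁, k₁, hi₁, hk₁, hne₁⟩, ⟨i₂, k₂, hi₂, hk₂, hne₂⟩⟩ := hcon
    have hc2' : 2 ≤ c := by
      by_contra hcc
      exact hne₁ (congrArg μ (Fin.ext (by omega)))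
    have hm2' : 2 ≤ n - c := by
      by_contra hmm
      have h1 := i₂.isLt
      have h2 := k₂.isLt
      exact hne₂ (congrArg μ (Fin.ext (by omega)))
    have hμ0 : ∀ i : Fin n, (i:ℕ) < c → μ i ≤ μ ⟨0, h0n⟩ := fun i hi =>
      hdec1 ⟨0, h0n⟩ i (by simp [Fin.le_def]) hi
    obtain ⟨w, hw, hwlt⟩ : ∃ w : Fin n, (w:ℕ) < c ∧ μ w < μ ⟨0, h0n⟩ := by
      rcases lt_or_gt_of_ne hne₁ with h | h
      · exact ⟨i₁, hi₁, lt_of_lt_of_le h (hμ0 k₁ hk₁)⟩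
      · exact ⟨k₁, hk₁, lt_of_lt_of_le h (hμ0 i₁ hi₁)⟩
    have hPc : blockPsum μ 0 c < (c:ℚ) * μ ⟨0, h0n⟩ :=
      psum_lt_const μ 0 c (by omega) _ (fun i _ h2 => hμ0 i (by omega)) w (by omega)
        (by omega) hwlt
    have hP1 : blockPsum μ 0 1 = μ ⟨0, h0n⟩ := by
      rw [blockPsum_eq_sum_range μ 0 1 (by omega), Finset.sum_range_one,
        gval_lt μ (by omega : 0 + 0 < n)]
    have ht1pos : 0 < trm μ 0 c 1 := by
      rw [trm, hP1]
      push_cast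
      have he : (1:ℚ)/(c:ℚ) * blockPsum μ 0 c = blockPsum μ 0 c / (c:ℚ) := by ring
      rw [he, sub_pos, div_lt_iff₀ hC]
      nlinarith
    have hd1pos : 0 < blockDepth' μ 0 c :=
      lt_of_lt_of_le ht1pos (le_blockDepth' μ 0 c 1 le_rfl (by omega))
    have hμc : ∀ i : Fin n, c ≤ (i:ℕ) → μ i ≤ μ ⟨c, hcn⟩ := fun i hi =>
      hdec2 ⟨c, hcn⟩ i (by simp) (by simp [Fin.le_def, hi])
    obtain ⟨w₂, hw₂, hwlt₂⟩ : ∃ w : Fin n, c ≤ (w:ℕ) ∧ μ w < μ ⟨c, hcn⟩ := by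
      rcases lt_or_gt_of_ne hne₂ with h | h
      · exact ⟨i₂, hi₂, lt_of_lt_of_le h (hμc k₂ hk₂)⟩
      · exact ⟨k₂, hk₂, lt_of_lt_of_le h (hμc i₂ hi₂)⟩
    have hQm : blockPsum μ c (n-c) < ((n-c:ℕ):ℚ) * μ ⟨c, hcn⟩ :=
      psum_lt_const μ c (n-c) (by omega) _ (fun i h1 _ => hμc i h1) w₂ (by omega)
        (by have := w₂.isLt; omega) hwlt₂
    have hQ1 : blockPsum μ c 1 = μ ⟨c, hcn⟩ := by
      rw [blockPsum_eq_sum_range μ c 1 (by omega), Finset.sum_range_one,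
        gval_lt μ (by omega : c + 0 < n)]
      congr 1
    have ht2pos : 0 < trm μ c (n-c) 1 := by
      rw [trm, hQ1]
      push_cast
      have he : (1:ℚ)/((n-c:ℕ):ℚ) * blockPsum μ c (n-c) =
          blockPsum μ c (n-c) / ((n-c:ℕ):ℚ) := by ring
      rw [he, sub_pos, div_lt_iff₀ hM]
      nlinarith
    have hd2pos : 0 < blockDepth' μ c (n-c) :=
      lt_of_lt_of_le ht2pos (le_blockDepth' μ c (n-c) 1 le_rfl (by omega))
    obtain ⟨j₁, ha1, hb1, he1⟩ := blockDepth'_exists μ 0 c hc2'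
    obtain ⟨j₂, ha2, hb2, he2⟩ := blockDepth'_exists μ c (n-c) hm2'
    have h := hLB j₁ j₂ (by omega) (by omega) (by omega) (by omega)
    rw [show blockPsum μ 0 c/(c:ℚ) - blockPsum μ c (n-c)/((n-c:ℕ):ℚ) = 0 from
      sub_eq_zero_of_eq hΔ, zero_mul, zero_div, add_zero] at h
    have e1' : 0 < trm μ 0 c j₁ := he1 ▸ hd1pos
    have e2' : 0 < trm μ c (n-c) j₂ := he2 ▸ hd2pos
    have hlt1 : blockDepth' μ 0 c < blockDepth' σ 0 n := by rw [he1]; linarith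
    have hlt2 : blockDepth' μ c (n-c) < blockDepth' σ 0 n := by rw [he2]; linarith
    exact absurd heq (ne_of_lt (max_lt hlt1 hlt2))
  · rintro ⟨hΔ, hcase⟩
    have hΔ0 : blockPsum μ 0 c/(c:ℚ) - blockPsum μ c (n-c)/((n-c:ℕ):ℚ) = 0 :=
      sub_eq_zero_of_eq hΔ
    have hzl : ∀ j₁ j₂ : ℕ, j₁ ≤ c → j₂ ≤ n - c → 1 ≤ j₁ + j₂ → j₁ + j₂ ≤ n - 1 →
        trm μ 0 c j₁ + trm μ c (n-c) j₂ ≤ blockDepth' σ 0 n := by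
      intro j₁ j₂ h1 h2 h3 h4
      have := hLB j₁ j₂ h1 h2 h3 h4
      rwa [hΔ0, zero_mul, zero_div, add_zero] at this
    have hzu : ∃ j₁ j₂ : ℕ, j₁ ≤ c ∧ j₂ ≤ n - c ∧
        blockDepth' σ 0 n ≤ trm μ 0 c j₁ + trm μ c (n-c) j₂ := by
      obtain ⟨j₁, j₂, h1, h2, _, _, hD⟩ := hUB
      rw [hΔ0, zero_mul, zero_div, add_zero] at hD
      exact ⟨j₁, j₂, h1, h2, hD⟩
    have hD0 : 0 ≤ blockDepth' σ 0 n := by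
      have := hzl c 0 le_rfl (by omega) (by omega) (by omega)
      rw [hz1c, hz20] at this; linarith
    rcases hcase with hA | hB
    · have hcst : ∀ k (hk : k < n), 0 ≤ k → k < 0 + c → μ ⟨k,hk⟩ = μ ⟨0, h0n⟩ :=
        fun k hk h1 h2 => hA ⟨k,hk⟩ ⟨0, h0n⟩ (by simpa using h2) (by show 0 < c; omega)
      have ht1all : ∀ j, j ≤ c → trm μ 0 c j = 0 := fun j hj =>
        trm_const μ 0 c (by omega) (by omega) (μ ⟨0, h0n⟩) hcst hj
      have hd1 : blockDepth' μ 0 c = 0 := blockDepth'_const μ 0 c (by omega) (by omega) (μ ⟨0, h0n⟩) hcst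
      have hDd2 : blockDepth' μ c (n-c) ≤ blockDepth' σ 0 n := by
        obtain ⟨j₂, h1, h2, he⟩ := blockDepth'_attain μ c (n-c) (by omega)
        rw [he]
        have := hzl 0 j₂ (by omega) h2 (by omega) (by omega)
        have h00 := ht1all 0 (by omega)
        linarith
      have hDle : blockDepth' σ 0 n ≤ max (blockDepth' μ 0 c) (blockDepth' μ c (n-c)) := by
        obtain ⟨j₁, j₂, hj₁, hj₂, hD⟩ := hzu
        have ha : trm μ 0 c j₁ = 0 := ht1all j₁ hj₁
        have hb : trm μ c (n-c) j₂ ≤ max (blockDepth' μ 0 c) (blockDepth' μ c (n-c)) := by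
          by_cases e0 : j₂ = 0
          · rw [e0, hz20]; exact le_max_of_le_left (le_of_eq hd1.symm)
          · by_cases em : j₂ = n - c
            · rw [em, hz2m]; exact le_max_of_le_left (le_of_eq hd1.symm)
            · exact le_max_of_le_right (le_blockDepth' μ c (n-c) j₂ (by omega) (by omega))
        linarith
      exact le_antisymm (max_le (by rw [hd1]; exact hD0) hDd2) hDle
    · have hcst : ∀ k (hk : k < n), c ≤ k → k < c + (n-c) → μ ⟨k,hk⟩ = μ ⟨c, hcn⟩ :=
        fun k hk h1 h2 => hB ⟨k,hk⟩ ⟨c, hcn⟩ (by simpa using h1) (by simp)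
      have ht2all : ∀ j, j ≤ n - c → trm μ c (n-c) j = 0 := fun j hj =>
        trm_const μ c (n-c) (by omega) (by omega) (μ ⟨c, hcn⟩) hcst hj
      have hd2 : blockDepth' μ c (n-c) = 0 :=
        blockDepth'_const μ c (n-c) (by omega) (by omega) (μ ⟨c, hcn⟩) hcst
      have hDd1 : blockDepth' μ 0 c ≤ blockDepth' σ 0 n := by
        obtain ⟨j₁, h1, h2, he⟩ := blockDepth'_attain μ 0 c (by omega)
        rw [he]
        have := hzl j₁ 0 h2 (by omega) (by omega) (by omega)
        have h00 := ht2all 0 (by omega)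
        linarith
      have hDle : blockDepth' σ 0 n ≤ max (blockDepth' μ 0 c) (blockDepth' μ c (n-c)) := by
        obtain ⟨j₁, j₂, hj₁, hj₂, hD⟩ := hzu
        have hbz : trm μ c (n-c) j₂ = 0 := ht2all j₂ hj₂
        have ha : trm μ 0 c j₁ ≤ max (blockDepth' μ 0 c) (blockDepth' μ c (n-c)) := by
          by_cases e0 : j₁ = 0
          · rw [e0, hz10]; exact le_max_of_le_right (le_of_eq hd2.symm)
          · by_cases em : j₁ = c
            · rw [em, hz1c]; exact le_max_of_le_right (le_of_eq hd2.symm)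
            · exact le_max_of_le_left (le_blockDepth' μ 0 c j₁ (by omega) (by omega))
        linarith
      exact le_antisymm (max_le hDd1 (by rw [hd2]; exact hD0)) hDle
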